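/- Let f : ℝ → ℝ satisfy |f(x)| ≤ a·cosh(b·x) for all x with a > 0, b ∈ ℝ, let ρ be a compactly supported probability measure on ℝ with moment generating function ψ(t) = ∫ e^{t·x} dρ(x), and set ψ̃(b) = max(ψ(b), ψ(−b)). Then for every λ > 0 and every x ∈ ℝ, Σ_{n=0}^∞ (e^{−λ} λ^n / (n+1)!) · |∫ f d(δ_x ∗ ρ^{∗n})| ≤ a · e^{|b·x| − λ} · (e^{λ·ψ̃(b)} − 1) / (λ·ψ̃(b)), and Σ_{n=0}^∞ (e^{−λ} λ^n / (n+1)!) · |∫ f d(ρ^{∗(n+1)})| ≤ a · (e^{λ·ψ̃(b)} − 1) / (λ·e^{λ}). -/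

import Mathlib

open MeasureTheory Filter

/-- The `n`-fold convolution power of a measure on `ℝ`, with `ρ^{∗0} = δ₀`. -/
noncomputable def convPow (ρ : Measure ℝ) : ℕ → Measure ℝ
  | 0 => Measure.dirac 0
  | n + 1 => (convPow ρ n).conv ρ

/-- The moment generating function `ψ(t) = ∫ e^{t·x} dρ(x)`. -/
noncomputable def mgf' (ρ : Measure ℝ) (t : ℝ) : ℝ := ∫ x, Real.exp (t * x) ∂ρ

open scoped ENNReal

noncomputable def eI (μ : Measure ℝ) (c : ℝ) : ℝ≥0∞ :=
  ∫⁻ y, ENNReal.ofReal (Real.exp (c * y)) ∂μ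

lemma meas_e (c : ℝ) : Measurable fun y : ℝ => ENNReal.ofReal (Real.exp (c * y)) :=
  (Real.measurable_exp.comp (measurable_id.const_mul c)).ennreal_ofReal

lemma eI_conv (μ ν : Measure ℝ) [SFinite μ] [SFinite ν] (c : ℝ) :
    eI (μ.conv ν) c = eI μ c * eI ν c := by
  have hm : Measurable fun p : ℝ × ℝ => ENNReal.ofReal (Real.exp (c * (p.1 + p.2))) := by
    fun_prop
  rw [eI, Measure.conv, lintegral_map (meas_e c) measurable_add,
    lintegral_prod _ hm.aemeasurable]
  rw [eI, eI]
  calc ∫⁻ x, ∫⁻ y, ENNReal.ofReal (Real.exp (c * (x + y))) ∂ν ∂μ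
      = ∫⁻ x, ENNReal.ofReal (Real.exp (c * x)) *
          ∫⁻ y, ENNReal.ofReal (Real.exp (c * y)) ∂ν ∂μ := by
        refine lintegral_congr fun x => ?_
        rw [← lintegral_const_mul _ (meas_e c)]
        refine lintegral_congr fun y => ?_
        rw [← ENNReal.ofReal_mul (Real.exp_nonneg _), ← Real.exp_add, mul_add]
    _ = _ := lintegral_mul_const _ (meas_e c)

instance convPow_prob (ρ : Measure ℝ) [IsProbabilityMeasure ρ] (n : ℕ) :
    IsProbabilityMeasure (convPow ρ n) := by
  induction n with
  | zero => exact Measure.dirac.isProbabilityMeasure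
  | succ n ih =>
    show IsProbabilityMeasure ((convPow ρ n).conv ρ)
    infer_instance

lemma eI_convPow (ρ : Measure ℝ) [IsProbabilityMeasure ρ] (c : ℝ) (n : ℕ) :
    eI (convPow ρ n) c = (eI ρ c) ^ n := by
  induction n with
  | zero =>
    simp only [convPow, pow_zero]
    rw [eI, lintegral_dirac]
    simp
  | succ n ih =>
    simp only [convPow]
    rw [eI_conv, ih, pow_succ]

lemma eI_ne_top (ρ : Measure ℝ) [IsProbabilityMeasure ρ]
    (K : Set ℝ) (hK : IsCompact K) (hsupp : ρ Kᶜ = 0) (c : ℝ) : eI ρ c ≠ ⊤ := by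
  obtain ⟨R, hR⟩ := hK.isBounded.subset_closedBall 0
  have hae : ∀ᵐ y ∂ρ, y ∈ K := mem_ae_iff.mpr hsupp
  have hle : eI ρ c ≤ ∫⁻ _, ENNReal.ofReal (Real.exp (|c| * R)) ∂ρ := by
    refine lintegral_mono_ae (hae.mono fun y hy => ?_)
    refine ENNReal.ofReal_le_ofReal (Real.exp_le_exp.2 ?_)
    have h1 : |y| ≤ R := by
      have := hR hy
      simpa [Metric.mem_closedBall, Real.dist_eq] using this
    calc c * y ≤ |c * y| := le_abs_self _
      _ = |c| * |y| := abs_mul _ _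
      _ ≤ |c| * R := by gcongr
  rw [lintegral_const, measure_univ, mul_one] at hle
  exact ne_top_of_le_ne_top ENNReal.ofReal_ne_top hle

lemma mgf'_eq (ρ : Measure ℝ) (c : ℝ) : mgf' ρ c = (eI ρ c).toReal := by
  have hm : AEStronglyMeasurable (fun y : ℝ => Real.exp (c * y)) ρ :=
    (Real.measurable_exp.comp (measurable_const.mul measurable_id)).aestronglyMeasurable
  rw [mgf', integral_eq_lintegral_of_nonneg_ae (ae_of_all _ fun y => Real.exp_nonneg _) hm]
  rfl

lemma integrable_exp_of (ρ : Measure ℝ) (c : ℝ) (h : eI ρ c ≠ ⊤) :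
    Integrable (fun y => Real.exp (c * y)) ρ :=
  ⟨(Real.measurable_exp.comp (measurable_const.mul measurable_id)).aestronglyMeasurable,
   (hasFiniteIntegral_iff_ofReal (ae_of_all _ fun y => Real.exp_nonneg _)).2 h.lt_top⟩

lemma abs_integral_le (f : ℝ → ℝ) (a b : ℝ) (ha : 0 < a)
    (hbound : ∀ x, |f x| ≤ a * Real.cosh (b * x))
    (μ : Measure ℝ) (hb : eI μ b ≠ ⊤) (hb' : eI μ (-b) ≠ ⊤) :
    |∫ y, f y ∂μ| ≤ a / 2 * ((eI μ b).toReal + (eI μ (-b)).toReal) := by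
  have hint1 := integrable_exp_of μ b hb
  have hint2 := integrable_exp_of μ (-b) hb'
  have hgint : Integrable (fun y => a / 2 * (Real.exp (b * y) + Real.exp (-b * y))) μ :=
    (hint1.add hint2).const_mul _
  have key : |∫ y, f y ∂μ| ≤ ∫ y, a / 2 * (Real.exp (b * y) + Real.exp (-b * y)) ∂μ := by
    rw [← Real.norm_eq_abs]
    refine norm_integral_le_of_norm_le hgint (ae_of_all _ fun y => ?_)
    rw [Real.norm_eq_abs]
    have h1 := hbound y
    rw [Real.cosh_eq] at h1
    have : -b * y = -(b * y) := by ring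
    rw [this]
    linarith
  refine key.trans (le_of_eq ?_)
  have e1 : ∫ y, Real.exp (b * y) ∂μ = (eI μ b).toReal := mgf'_eq μ b
  have e2 : ∫ y, Real.exp (-b * y) ∂μ = (eI μ (-b)).toReal := mgf'_eq μ (-b)
  rw [integral_const_mul]
  rw [integral_add hint1 hint2]
  rw [e1, e2]

lemma hasSum_aux1 (t : ℝ) :
    HasSum (fun n : ℕ => t ^ (n + 1) / (n + 1).factorial) (Real.exp t - 1) := by
  have h : HasSum (fun n : ℕ => t ^ n / n.factorial) (Real.exp t) := by
    rw [Real.exp_eq_exp_ℝ]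
    exact NormedSpace.expSeries_div_hasSum_exp t
  refine (hasSum_nat_add_iff (f := fun n : ℕ => t ^ n / n.factorial) 1).mpr ?_
  simpa using h

lemma hasSum_aux (t : ℝ) (ht : t ≠ 0) :
    HasSum (fun n : ℕ => t ^ n / (n + 1).factorial) ((Real.exp t - 1) / t) := by
  have heq : (fun n : ℕ => t ^ n / ((n + 1).factorial : ℝ))
      = fun n : ℕ => t ^ (n + 1) / (n + 1).factorial / t := by
    funext n
    rw [pow_succ]
    field_simp
  rw [heq]
  exact (hasSum_aux1 t).div_const t

theorem fitness_series_explicit_bounds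
    (f : ℝ → ℝ) (a b : ℝ) (ha : 0 < a)
    (hbound : ∀ x, |f x| ≤ a * Real.cosh (b * x))
    (ρ : Measure ℝ) (hρ : IsProbabilityMeasure ρ)
    (K : Set ℝ) (hK : IsCompact K) (hsupp : ρ Kᶜ = 0)
    (l : ℝ) (hl : 0 < l) (x : ℝ) :
    (∑' n : ℕ, ENNReal.ofReal (Real.exp (-l) * l ^ n / (n + 1).factorial *
        |∫ y, f y ∂((Measure.dirac x).conv (convPow ρ n))|))
      ≤ ENNReal.ofReal (a * Real.exp (|b * x| - l) *
          (Real.exp (l * max (mgf' ρ b) (mgf' ρ (-b))) - 1) /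
          (l * max (mgf' ρ b) (mgf' ρ (-b)))) ∧
    (∑' n : ℕ, ENNReal.ofReal (Real.exp (-l) * l ^ n / (n + 1).factorial *
        |∫ y, f y ∂(convPow ρ (n + 1))|))
      ≤ ENNReal.ofReal (a *
          (Real.exp (l * max (mgf' ρ b) (mgf' ρ (-b))) - 1) /
          (l * Real.exp l)) := by
  haveI := hρ
  set ψb := mgf' ρ b with hψb_def
  set ψb' := mgf' ρ (-b) with hψb'_def
  set M := max ψb ψb' with hM_def
  have hψb0 : 0 ≤ ψb := by rw [hψb_def, mgf'_eq]; exact ENNReal.toReal_nonneg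
  have hψb'0 : 0 ≤ ψb' := by rw [hψb'_def, mgf'_eq]; exact ENNReal.toReal_nonneg
  have hM0 : 0 ≤ M := le_trans hψb0 (le_max_left _ _)
  have hEb : eI ρ b = ENNReal.ofReal ψb := by
    rw [hψb_def, mgf'_eq, ENNReal.ofReal_toReal (eI_ne_top ρ K hK hsupp b)]
  have hEb' : eI ρ (-b) = ENNReal.ofReal ψb' := by
    rw [hψb'_def, mgf'_eq, ENNReal.ofReal_toReal (eI_ne_top ρ K hK hsupp (-b))]
  -- 1 ≤ M
  have hM1 : 1 ≤ M := by
    have hint1 := integrable_exp_of ρ b (eI_ne_top ρ K hK hsupp b)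
    have hint2 := integrable_exp_of ρ (-b) (eI_ne_top ρ K hK hsupp (-b))
    have h2 : (2 : ℝ) ≤ ψb + ψb' := by
      have : ψb + ψb' = ∫ y, (Real.exp (b * y) + Real.exp (-b * y)) ∂ρ := by
        rw [hψb_def, hψb'_def, mgf', mgf', ← integral_add hint1 hint2]
      rw [this]
      have h3 : (2 : ℝ) = ∫ _, (2 : ℝ) ∂ρ := by simp
      rw [h3]
      refine integral_mono (integrable_const 2) (hint1.add hint2) fun y => ?_
      have hc := Real.one_le_cosh (b * y)
      rw [Real.cosh_eq] at hc
      have : -b * y = -(b * y) := by ring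
      rw [this]
      linarith
    have : ψb ≤ M := le_max_left _ _
    have : ψb' ≤ M := le_max_right _ _
    linarith [le_max_left ψb ψb', le_max_right ψb ψb']
  have hMpos : 0 < M := lt_of_lt_of_le one_pos hM1
  have hlM : (0 : ℝ) < l * M := mul_pos hl hMpos
  -- per-n bounds, part 1
  have bound1 : ∀ n : ℕ,
      |∫ y, f y ∂((Measure.dirac x).conv (convPow ρ n))| ≤ a * Real.exp |b * x| * M ^ n := by
    intro n
    set μn := (Measure.dirac x).conv (convPow ρ n) with hμn
    have hc : ∀ c : ℝ, eI μn c = ENNReal.ofReal (Real.exp (c * x)) * (eI ρ c) ^ n := by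
      intro c
      rw [hμn, eI_conv, eI_convPow]
      congr 1
      rw [eI, lintegral_dirac]
    have hcb : eI μn b = ENNReal.ofReal (Real.exp (b * x) * ψb ^ n) := by
      rw [hc b, hEb, ← ENNReal.ofReal_pow hψb0,
        ← ENNReal.ofReal_mul (Real.exp_nonneg _)]
    have hcb' : eI μn (-b) = ENNReal.ofReal (Real.exp (-b * x) * ψb' ^ n) := by
      rw [hc (-b), hEb', ← ENNReal.ofReal_pow hψb'0,
        ← ENNReal.ofReal_mul (Real.exp_nonneg _)]
    have h1 := abs_integral_le f a b ha hbound μn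
      (by rw [hcb]; exact ENNReal.ofReal_ne_top)
      (by rw [hcb']; exact ENNReal.ofReal_ne_top)
    rw [hcb, hcb', ENNReal.toReal_ofReal (by positivity),
      ENNReal.toReal_ofReal (by positivity)] at h1
    have hX : Real.exp (b * x) * ψb ^ n ≤ Real.exp |b * x| * M ^ n :=
      mul_le_mul (Real.exp_le_exp.2 (le_abs_self _))
        (pow_le_pow_left₀ hψb0 (le_max_left _ _) n) (pow_nonneg hψb0 n) (Real.exp_nonneg _)
    have hY : Real.exp (-b * x) * ψb' ^ n ≤ Real.exp |b * x| * M ^ n :=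
      mul_le_mul (Real.exp_le_exp.2 (by rw [neg_mul]; exact neg_le_abs _))
        (pow_le_pow_left₀ hψb'0 (le_max_right _ _) n) (pow_nonneg hψb'0 n) (Real.exp_nonneg _)
    nlinarith [Real.exp_pos |b * x|, pow_nonneg hM0 n]
  -- per-n bounds, part 2
  have bound2 : ∀ n : ℕ, |∫ y, f y ∂(convPow ρ (n + 1))| ≤ a * M ^ (n + 1) := by
    intro n
    have hcb : eI (convPow ρ (n + 1)) b = ENNReal.ofReal (ψb ^ (n + 1)) := by
      rw [eI_convPow, hEb, ← ENNReal.ofReal_pow hψb0]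
    have hcb' : eI (convPow ρ (n + 1)) (-b) = ENNReal.ofReal (ψb' ^ (n + 1)) := by
      rw [eI_convPow, hEb', ← ENNReal.ofReal_pow hψb'0]
    have h1 := abs_integral_le f a b ha hbound (convPow ρ (n + 1))
      (by rw [hcb]; exact ENNReal.ofReal_ne_top)
      (by rw [hcb']; exact ENNReal.ofReal_ne_top)
    rw [hcb, hcb', ENNReal.toReal_ofReal (by positivity),
      ENNReal.toReal_ofReal (by positivity)] at h1
    have hX : ψb ^ (n + 1) ≤ M ^ (n + 1) := pow_le_pow_left₀ hψb0 (le_max_left _ _) _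
    have hY : ψb' ^ (n + 1) ≤ M ^ (n + 1) := pow_le_pow_left₀ hψb'0 (le_max_right _ _) _
    nlinarith
  constructor
  · -- part 1
    set C := a * Real.exp (|b * x| - l) with hC
    have hC0 : 0 ≤ C := by positivity
    have hS : HasSum (fun n : ℕ => C * ((l * M) ^ n / (n + 1).factorial))
        (C * ((Real.exp (l * M) - 1) / (l * M))) :=
      (hasSum_aux (l * M) hlM.ne').mul_left C
    calc (∑' n : ℕ, ENNReal.ofReal (Real.exp (-l) * l ^ n / (n + 1).factorial *
            |∫ y, f y ∂((Measure.dirac x).conv (convPow ρ n))|))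
        ≤ ∑' n : ℕ, ENNReal.ofReal (C * ((l * M) ^ n / (n + 1).factorial)) := by
          refine ENNReal.tsum_le_tsum fun n => ENNReal.ofReal_le_ofReal ?_
          have hA : (0 : ℝ) ≤ Real.exp (-l) * l ^ n / (n + 1).factorial := by positivity
          calc Real.exp (-l) * l ^ n / (n + 1).factorial *
                |∫ y, f y ∂((Measure.dirac x).conv (convPow ρ n))|
              ≤ Real.exp (-l) * l ^ n / (n + 1).factorial *
                (a * Real.exp |b * x| * M ^ n) :=
                mul_le_mul_of_nonneg_left (bound1 n) hA
            _ = C * ((l * M) ^ n / (n + 1).factorial) := by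
                rw [hC, Real.exp_sub, Real.exp_neg, mul_pow]
                ring
      _ = ENNReal.ofReal (∑' n : ℕ, C * ((l * M) ^ n / (n + 1).factorial)) :=
          (ENNReal.ofReal_tsum_of_nonneg (fun n => by positivity) hS.summable).symm
      _ = ENNReal.ofReal (C * ((Real.exp (l * M) - 1) / (l * M))) := by rw [hS.tsum_eq]
      _ ≤ ENNReal.ofReal (a * Real.exp (|b * x| - l) * (Real.exp (l * M) - 1) / (l * M)) := by
          refine ENNReal.ofReal_le_ofReal (le_of_eq ?_)
          rw [hC]; ring
  · -- part 2
    set C := a * Real.exp (-l) / l with hC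
    have hS : HasSum (fun n : ℕ => C * ((l * M) ^ (n + 1) / (n + 1).factorial))
        (C * (Real.exp (l * M) - 1)) :=
      (hasSum_aux1 (l * M)).mul_left C
    calc (∑' n : ℕ, ENNReal.ofReal (Real.exp (-l) * l ^ n / (n + 1).factorial *
            |∫ y, f y ∂(convPow ρ (n + 1))|))
        ≤ ∑' n : ℕ, ENNReal.ofReal (C * ((l * M) ^ (n + 1) / (n + 1).factorial)) := by
          refine ENNReal.tsum_le_tsum fun n => ENNReal.ofReal_le_ofReal ?_
          have hA : (0 : ℝ) ≤ Real.exp (-l) * l ^ n / (n + 1).factorial := by positivity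
          calc Real.exp (-l) * l ^ n / (n + 1).factorial * |∫ y, f y ∂(convPow ρ (n + 1))|
              ≤ Real.exp (-l) * l ^ n / (n + 1).factorial * (a * M ^ (n + 1)) :=
                mul_le_mul_of_nonneg_left (bound2 n) hA
            _ = C * ((l * M) ^ (n + 1) / (n + 1).factorial) := by
                rw [hC, mul_pow, pow_succ l n]
                field_simp
      _ = ENNReal.ofReal (∑' n : ℕ, C * ((l * M) ^ (n + 1) / (n + 1).factorial)) :=
          (ENNReal.ofReal_tsum_of_nonneg (fun n => by positivity) hS.summable).symm
      _ = ENNReal.ofReal (C * (Real.exp (l * M) - 1)) := by rw [hS.tsum_eq]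
      _ ≤ ENNReal.ofReal (a * (Real.exp (l * M) - 1) / (l * Real.exp l)) := by
          refine ENNReal.ofReal_le_ofReal (le_of_eq ?_)
          rw [hC, Real.exp_neg]
          field_simp
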